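/- For the adding machine T on the Cantor set and the point z = 0 (code 000...), for every n ≥ 0 one has |T^{2^n}(z) - z| = 2/3^{n+1}, and |T^k(z) - z| > 2/3^{n+1} for all k with 2^n < k < 2^{n+1}. -/

import Mathlib

open MeasureTheory Filter
open scoped Classical

/-- The point of the middle-third Cantor set with ternary code `x`
(digit `true` ↦ 2, `false` ↦ 0): `x = Σ_{k≥1} 2 x_k / 3^k`. -/
noncomputable def cantorVal (x : ℕ → Bool) : ℝ :=
  ∑' k : ℕ, (if x k then 2 else 0) / 3 ^ (k + 1)

/-- The adding machine on codes: set the first digit equal to `false` (i.e. 0) to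
`true` (i.e. 1) and all earlier digits to `false`; `111... ↦ 000...`. -/
noncomputable def addingMachine (x : ℕ → Bool) : ℕ → Bool :=
  if h : ∃ n, x n = false then
    fun k => if k < Nat.find h then false else if k = Nat.find h then true else x k
  else fun _ => false

lemma addingMachine_testBit (k : ℕ) :
    addingMachine (fun i => Nat.testBit k i) = fun i => Nat.testBit (k + 1) i := by
  have h : ∃ n, Nat.testBit k n = false :=
    ⟨k, Nat.testBit_lt_two_pow (Nat.lt_two_pow_self (n := k))⟩
  have h' : ∃ n, (fun i => Nat.testBit k i) n = false := h
  set j := Nat.find h' with hjdef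
  have hj : Nat.testBit k j = false := Nat.find_spec h'
  have hlt : ∀ i < j, Nat.testBit k i = true := by
    intro i hi
    have := Nat.find_min h' hi
    simpa using this
  have hmod : k % 2 ^ (j + 1) = 2 ^ j - 1 := by
    apply Nat.eq_of_testBit_eq
    intro i
    rw [Nat.testBit_mod_two_pow, Nat.testBit_two_pow_sub_one]
    rcases lt_trichotomy i j with h1 | h1 | h1
    · simp [h1, Nat.lt_succ_of_lt h1, hlt i h1]
    · simp [h1, hj]
    · have : ¬ i < j + 1 := by omega
      simp [this, h1, not_lt_of_gt h1]
  have hkeq : k = 2 ^ (j + 1) * (k / 2 ^ (j + 1)) + (2 ^ j - 1) := by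
    conv_lhs => rw [← Nat.div_add_mod k (2 ^ (j + 1))]
    rw [hmod]
  have hk1 : k + 1 = 2 ^ (j + 1) * (k / 2 ^ (j + 1)) + 2 ^ j := by
    have h2 : (1:ℕ) ≤ 2 ^ j := Nat.one_le_two_pow
    omega
  have hb1 : 2 ^ j < 2 ^ (j + 1) := Nat.pow_lt_pow_succ (by norm_num)
  have hb2 : 2 ^ j - 1 < 2 ^ (j + 1) := by omega
  funext i
  simp only [addingMachine, dif_pos h', ← hjdef]
  rw [hk1, Nat.testBit_two_pow_mul_add _ hb1]
  rcases lt_trichotomy i j with h1 | h1 | h1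
  · have : i < j + 1 := by omega
    simp [h1, this, Nat.testBit_two_pow_of_ne (by omega : j ≠ i)]
  · subst h1
    simp [Nat.lt_succ_self, Nat.testBit_two_pow_self]
  · have h2 : ¬ i < j + 1 := by omega
    have h3 : ¬ i < j := by omega
    have h4 : i ≠ j := by omega
    simp only [h2, if_false, h3, h4]
    have hk2 : k.testBit i = (k / 2 ^ (j + 1)).testBit (i - (j + 1)) := by
      conv_lhs => rw [hkeq]
      rw [Nat.testBit_two_pow_mul_add _ hb2]
      simp [h2]
    rw [hk2]

lemma iterate_addingMachine (k : ℕ) :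
    addingMachine^[k] (fun _ => false) = fun i => Nat.testBit k i := by
  induction k with
  | zero => simp
  | succ n ih =>
    rw [Function.iterate_succ_apply', ih, addingMachine_testBit]

lemma summable_cantor (x : ℕ → Bool) :
    Summable (fun k : ℕ => (if x k then (2:ℝ) else 0) / 3 ^ (k + 1)) := by
  apply Summable.of_nonneg_of_le (fun k => by positivity)
    (fun k => ?_) (Summable.mul_left 2 (summable_geometric_of_lt_one (by norm_num)
      (by norm_num : (1/3:ℝ) < 1)))
  have hle : (if x k then (2:ℝ) else 0) ≤ 2 := by split <;> norm_num
  calc (if x k then (2:ℝ) else 0) / 3 ^ (k + 1) ≤ 2 / 3 ^ k :=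
        div_le_div₀ (by norm_num) hle (by positivity)
          (pow_le_pow_right₀ (by norm_num) (Nat.le_succ k))
    _ = 2 * (1 / 3) ^ k := by rw [div_pow, one_pow]; ring


theorem stmt_8 (z : ℕ → Bool) (hz : z = fun _ => false) : ∀ n : ℕ,
    |cantorVal (addingMachine^[2 ^ n] z) - cantorVal z| = 2 / 3 ^ (n + 1) ∧
    ∀ k : ℕ, 2 ^ n < k → k < 2 ^ (n + 1) →
      |cantorVal (addingMachine^[k] z) - cantorVal z| > 2 / 3 ^ (n + 1) := by
  subst hz
  have hz0 : cantorVal (fun _ => false) = 0 := by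
    simp [cantorVal]
  intro n
  constructor
  · rw [iterate_addingMachine, hz0, sub_zero]
    have : cantorVal (fun i => Nat.testBit (2 ^ n) i) = 2 / 3 ^ (n + 1) := by
      unfold cantorVal
      rw [tsum_eq_single n]
      · simp [Nat.testBit_two_pow_self]
      · intro b hb
        simp [Nat.testBit_two_pow_of_ne (Ne.symm hb)]
    rw [this, abs_of_nonneg (by positivity)]
  · intro k h1 h2
    rw [iterate_addingMachine, hz0, sub_zero]
    have hbn : Nat.testBit k n = true := by
      rcases Bool.eq_false_or_eq_true (Nat.testBit k n) with hb | hb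
      · exact hb
      · exfalso
        -- bits of k: if bit n is false... need contradiction
        -- k < 2^(n+1) means all bits ≥ n+1 false; bit n false ⇒ k < 2^n
        have : k % 2 ^ (n + 1) = k := Nat.mod_eq_of_lt h2
        have hk2 : k < 2 ^ n := by
          have := Nat.lt_pow_two_of_testBit k (n := n) ?_
          · omega
          intro i hi
          rcases eq_or_lt_of_le hi with rfl | hi'
          · exact hb
          · exact Nat.testBit_lt_two_pow (lt_of_lt_of_le h2 (Nat.pow_le_pow_right (by norm_num) hi'))
        omega
    have hne : k ≠ 2 ^ n := by omega
    obtain ⟨i, hi⟩ : ∃ i, Nat.testBit k i ≠ Nat.testBit (2 ^ n) i :=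
      Nat.exists_testBit_ne_of_ne hne
    have hin : i ≠ n := by
      intro h; rw [h] at hi; simp [Nat.testBit_two_pow_self, hbn] at hi
    have hbi : Nat.testBit k i = true := by
      rcases Bool.eq_false_or_eq_true (Nat.testBit k i) with hb | hb
      · exact hb
      · exfalso; rw [hb, Nat.testBit_two_pow_of_ne (Ne.symm hin)] at hi; exact hi rfl
    have hilt : i < n + 1 := by
      by_contra hc
      push_neg at hc
      have := Nat.testBit_lt_two_pow (lt_of_lt_of_le h2 (Nat.pow_le_pow_right (by norm_num) hc))
      rw [this] at hbi; exact Bool.noConfusion hbi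
    -- cantorVal ≥ term n + term i > 2/3^(n+1)
    rw [abs_of_nonneg (by
      unfold cantorVal
      exact tsum_nonneg fun j => by positivity)]
    simp only [cantorVal]
    have hsum := summable_cantor (fun j => Nat.testBit k j)
    have hfin : ∑ j ∈ ({i, n} : Finset ℕ), (if Nat.testBit k j then (2:ℝ) else 0) / 3 ^ (j + 1)
        ≤ ∑' j : ℕ, (if Nat.testBit k j then (2:ℝ) else 0) / 3 ^ (j + 1) :=
      Summable.sum_le_tsum _ (fun j _ => by positivity) hsum
    rw [Finset.sum_insert (by simp [hin]), Finset.sum_singleton, hbi, hbn] at hfin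
    have hpos : (0:ℝ) < 2 / 3 ^ (i + 1) := by positivity
    calc (2:ℝ) / 3 ^ (n + 1) < 2 / 3 ^ (i + 1) + 2 / 3 ^ (n + 1) := by linarith
    _ ≤ _ := hfin
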